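/- Let M be a Turing machine in Mathlib's TM0 model over a finite tape alphabet Γ and a finite state set Λ, started in its initial state on the all-blank tape (input ε), and let N = Fintype.card Λ * Fintype.card Γ. Then the head position is nonzero after some number of steps (i.e., the head ever leaves its starting cell) if and only if the head position is nonzero after some number of steps i with i ≤ N + 1. -/

import Mathlib

/-- One step of a TM0 machine, additionally tracking the net head displacement
(`+1` for a right-move, `-1` for a left-move). -/
def stepPos {Γ Λ : Type} [Inhabited Γ] [Inhabited Λ] (M : Turing.TM0.Machine Γ Λ)
    (p : Turing.TM0.Cfg Γ Λ × ℤ) : Option (Turing.TM0.Cfg Γ Λ × ℤ) :=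
  (Turing.TM0.step M p.1).map fun c' =>
    (c', p.2 +
      match M p.1.q p.1.Tape.head with
      | some (_, Turing.TM0.Stmt.move Turing.Dir.left) => -1
      | some (_, Turing.TM0.Stmt.move Turing.Dir.right) => 1
      | _ => 0)

/-- Run the machine for `n` steps from configuration `c`, tracking the head
position (net displacement from the starting cell); `none` means the machine
halted at some point within the first `n` steps. -/
def runPos {Γ Λ : Type} [Inhabited Γ] [Inhabited Λ] (M : Turing.TM0.Machine Γ Λ)
    (c : Turing.TM0.Cfg Γ Λ) : ℕ → Option (Turing.TM0.Cfg Γ Λ × ℤ)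
  | 0 => some (c, 0)
  | n + 1 => (runPos M c n).bind (stepPos M)

open Turing Turing.TM0

variable {Γ Λ : Type} [Inhabited Γ] [Inhabited Λ]

lemma stepPos_shift (M : Machine Γ Λ) (c : Cfg Γ Λ) (x z : ℤ) :
    stepPos M (c, x + z) = (stepPos M (c, z)).map fun r => (r.1, x + r.2) := by
  unfold stepPos
  cases h : Turing.TM0.step M c <;> simp [h, add_assoc]

lemma map_shift_bind (M : Machine Γ Λ) (x : ℤ) (o : Option (Cfg Γ Λ × ℤ)) :
    (o.map fun r => (r.1, x + r.2)).bind (stepPos M) =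
      (o.bind (stepPos M)).map fun r => (r.1, x + r.2) := by
  cases o with
  | none => rfl
  | some q => simpa using stepPos_shift M q.1 x q.2

lemma runPos_add (M : Machine Γ Λ) (c : Cfg Γ Λ) (m n : ℕ) :
    runPos M c (m + n) = (runPos M c m).bind fun p =>
      (runPos M p.1 n).map fun r => (r.1, p.2 + r.2) := by
  induction n with
  | zero =>
    simp [runPos]
  | succ n ih =>
    rw [show m + (n + 1) = (m + n) + 1 by ring]
    show (runPos M c (m + n)).bind (stepPos M) = _
    rw [ih, Option.bind_assoc]
    cases h : runPos M c m with
    | none => rfl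
    | some p =>
      simp only [Option.bind_some]
      rw [map_shift_bind]
      rfl

lemma runPos_isSome_of_le (M : Machine Γ Λ) (c : Cfg Γ Λ) {n : ℕ} {p : Cfg Γ Λ × ℤ}
    (h : runPos M c n = some p) {m : ℕ} (hm : m ≤ n) :
    ∃ q, runPos M c m = some q := by
  have := runPos_add M c m (n - m)
  rw [Nat.add_sub_cancel' hm, h] at this
  cases hq : runPos M c m with
  | none => rw [hq] at this; simp at this
  | some q => exact ⟨q, rfl⟩

lemma blank_invariant (M : Machine Γ Λ) : ∀ i : ℕ,
    (∀ j ≤ i, ∀ p : Cfg Γ Λ × ℤ, runPos M (init []) j = some p → p.2 = 0) →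
    ∀ p : Cfg Γ Λ × ℤ, runPos M (init []) i = some p →
      p.1.Tape.left = ListBlank.mk [] ∧ p.1.Tape.right = ListBlank.mk [] := by
  intro i
  induction i with
  | zero =>
    intro _ p hp
    simp only [runPos, Option.some_inj] at hp
    subst hp
    constructor <;>
      simp [Turing.TM0.init, Turing.Tape.mk₁, Turing.Tape.mk₂, Turing.Tape.mk']
  | succ i ih =>
    intro h p hp
    simp only [runPos] at hp
    obtain ⟨q, hq, hstep⟩ := Option.bind_eq_some_iff.1 hp
    have hq0 : q.2 = 0 := h i (Nat.le_succ i) q hq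
    have hp0 : p.2 = 0 := h (i + 1) le_rfl p hp
    obtain ⟨hl, hr⟩ := ih (fun j hj => h j (hj.trans (Nat.le_succ i))) q hq
    rcases hM : M q.1.q q.1.Tape.head with _ | ⟨q', s⟩
    · exfalso
      obtain ⟨⟨q1, T⟩, z⟩ := q
      simp only [stepPos, Turing.TM0.step, hM] at hstep
      simp at hstep
    · obtain ⟨⟨q1, T⟩, z⟩ := q
      simp only at hM hq0 hl hr
      cases s with
      | move d =>
        exfalso
        cases d <;>
          · simp only [stepPos, Turing.TM0.step, hM] at hstep
            simp only [Option.map_some, Option.some_inj] at hstep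
            rw [← hstep] at hp0
            simp [hq0] at hp0
      | write a =>
        simp only [stepPos, Turing.TM0.step, hM] at hstep
        simp only [Option.map_some, Option.some_inj] at hstep
        rw [← hstep]
        simp [Turing.Tape.write, hl, hr]

/-- On the blank input, the head ever leaves its starting cell iff it does so
within the first `card Λ * card Γ + 1` steps. -/
theorem head_leaves_iff_leaves_early {Γ Λ : Type} [Inhabited Γ] [Inhabited Λ]
    [Fintype Γ] [Fintype Λ] (M : Turing.TM0.Machine Γ Λ) :
    (∃ (i : ℕ) (p : Turing.TM0.Cfg Γ Λ × ℤ),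
        runPos M (Turing.TM0.init ([] : List Γ)) i = some p ∧ p.2 ≠ 0) ↔
    (∃ i ≤ Fintype.card Λ * Fintype.card Γ + 1,
        ∃ p : Turing.TM0.Cfg Γ Λ × ℤ,
          runPos M (Turing.TM0.init ([] : List Γ)) i = some p ∧ p.2 ≠ 0) := by
  set N := Fintype.card Λ * Fintype.card Γ with hN
  constructor
  · rintro ⟨i, p, hp, hne⟩
    by_contra hcon
    push_neg at hcon
    have hcon' : ∀ j ≤ N + 1, ∀ q : Turing.TM0.Cfg Γ Λ × ℤ,
        runPos M (Turing.TM0.init ([] : List Γ)) j = some q → q.2 = 0 := by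
      intro j hj q hq
      by_contra hq2
      exact hq2 (hcon j hj q hq)
    have hi : N + 1 < i := by
      by_contra hle
      exact hne (hcon' i (le_of_not_gt hle) p hp)
    have halive : ∀ j ≤ N + 1, ∃ q, runPos M (Turing.TM0.init ([] : List Γ)) j = some q :=
      fun j hj => runPos_isSome_of_le M _ hp (hj.trans hi.le)
    -- pigeonhole
    set c₀ : Turing.TM0.Cfg Γ Λ × ℤ := (Turing.TM0.init ([] : List Γ), 0) with hc₀
    set f : Fin (N + 2) → Λ × Γ := fun j =>
      (((runPos M (Turing.TM0.init ([] : List Γ)) j).getD c₀).1.q,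
       ((runPos M (Turing.TM0.init ([] : List Γ)) j).getD c₀).1.Tape.head) with hf
    obtain ⟨a, b, hab, hfab⟩ := Fintype.exists_ne_map_eq_of_card_lt f
      (by rw [Fintype.card_prod, Fintype.card_fin, hN]; omega)
    -- wlog a < b
    wlog hlt : (a : ℕ) < (b : ℕ) generalizing a b
    · exact this b a hab.symm hfab.symm
        (lt_of_le_of_ne (le_of_not_gt hlt) (fun h => hab (Fin.ext h.symm)))
    have hjN : (a : ℕ) ≤ N + 1 := Nat.lt_succ_iff.1 a.2
    have hkN : (b : ℕ) ≤ N + 1 := Nat.lt_succ_iff.1 b.2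
    obtain ⟨qj, hqj⟩ := halive (a : ℕ) hjN
    obtain ⟨qk, hqk⟩ := halive (b : ℕ) hkN
    have hqj0 : qj.2 = 0 := hcon' (a : ℕ) hjN qj hqj
    have hqk0 : qk.2 = 0 := hcon' (b : ℕ) hkN qk hqk
    obtain ⟨hjl, hjr⟩ := blank_invariant M (a : ℕ) (fun m hm => hcon' m (hm.trans hjN)) qj hqj
    obtain ⟨hkl, hkr⟩ := blank_invariant M (b : ℕ) (fun m hm => hcon' m (hm.trans hkN)) qk hqk
    have hfj : f a = (qj.1.q, qj.1.Tape.head) := by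
      simp only [hf, hqj, Option.getD_some]
    have hfk : f b = (qk.1.q, qk.1.Tape.head) := by
      simp only [hf, hqk, Option.getD_some]
    rw [hfj, hfk] at hfab
    have hq : qj.1.q = qk.1.q := congrArg Prod.fst hfab
    have hh : qj.1.Tape.head = qk.1.Tape.head := congrArg Prod.snd hfab
    have hceq : qj.1 = qk.1 := by
      show (⟨qj.1.q, ⟨qj.1.Tape.head, qj.1.Tape.left, qj.1.Tape.right⟩⟩ : Turing.TM0.Cfg Γ Λ) =
        ⟨qk.1.q, ⟨qk.1.Tape.head, qk.1.Tape.left, qk.1.Tape.right⟩⟩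
      rw [hq, hh, hjl, hjr, hkl, hkr]
    have hperiod : ∀ m : ℕ, runPos M (Turing.TM0.init ([] : List Γ)) ((a : ℕ) + m) =
        runPos M (Turing.TM0.init ([] : List Γ)) ((b : ℕ) + m) := by
      intro m
      rw [runPos_add, runPos_add, hqj, hqk, Option.bind_some, Option.bind_some,
        hceq, hqj0, hqk0]
    have key : ∀ n, ∀ q : Turing.TM0.Cfg Γ Λ × ℤ,
        runPos M (Turing.TM0.init ([] : List Γ)) n = some q → q.2 = 0 := by
      intro n
      induction n using Nat.strong_induction_on with
      | _ n IH =>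
        intro q hq'
        by_cases hn : n ≤ N + 1
        · exact hcon' n hn q hq'
        · have hkn : (b : ℕ) ≤ n := hkN.trans (le_of_not_ge hn)
          have hmeq : (b : ℕ) + (n - (b : ℕ)) = n := Nat.add_sub_cancel' hkn
          have hper := hperiod (n - (b : ℕ))
          rw [hmeq, hq'] at hper
          exact IH ((a : ℕ) + (n - (b : ℕ))) (by omega) q hper
    exact hne (key i p hp)
  · rintro ⟨i, _, p, hp, hne⟩
    exact ⟨i, p, hp, hne⟩
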